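/- (Kálmán's coefficient lemma) Let x be an element of the Hecke algebra H_n, and expand x in the positive basis as x = Σ_{w∈S_n} a_w T_w and in the negative basis as x = Σ_{w∈S_n} b_w U_w, where U_w = (T_{w^{-1}})^{-1} and a_w, b_w ∈ Z[z,z^{-1}]. Then the coefficients of the longest element agree: a_δ = b_δ. -/

import Mathlib

open Equiv LaurentPolynomial

noncomputable section

/-- The base ring `ℤ[z, z⁻¹]` of Laurent polynomials in the skein variable `z`. -/
abbrev R : Type := LaurentPolynomial ℤ

/-- The skein variable `z ∈ ℤ[z, z⁻¹]`. -/
def z : R := LaurentPolynomial.T 1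

/-- The Coxeter length of a permutation, computed as its number of inversions. -/
def invCount {n : ℕ} (w : Equiv.Perm (Fin n)) : ℕ :=
  (Finset.univ.filter fun p : Fin n × Fin n => p.1 < p.2 ∧ w p.2 < w p.1).card

/-- `s` is an adjacent transposition (simple reflection) `sᵢ = (i, i+1)`. -/
def IsAdjSwap {n : ℕ} (s : Equiv.Perm (Fin n)) : Prop :=
  ∃ i j : Fin n, (j : ℕ) = (i : ℕ) + 1 ∧ s = Equiv.swap i j

lemma invCount_one (n : ℕ) : invCount (1 : Equiv.Perm (Fin n)) = 0 := by
  rw [invCount, Finset.card_eq_zero, Finset.filter_eq_empty_iff]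
  rintro p - ⟨h1, h2⟩
  simp only [Equiv.Perm.one_apply] at h2
  exact absurd h2 (not_lt.2 h1.le)

lemma swap_lt_swap_iff {n : ℕ} {i j : Fin n} (hij : (j : ℕ) = (i : ℕ) + 1) {p q : Fin n}
    (h1 : ¬(p = i ∧ q = j)) (h2 : ¬(p = j ∧ q = i)) :
    Equiv.swap i j p < Equiv.swap i j q ↔ p < q := by
  simp only [Equiv.swap_apply_def, Fin.lt_def]
  split_ifs <;> simp_all [Fin.ext_iff] <;> omega

open Finset in
lemma invCount_mul_adjSwap {n : ℕ} (u : Equiv.Perm (Fin n)) {i j : Fin n}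
    (hij : (j : ℕ) = (i : ℕ) + 1) :
    (u i < u j ∧ invCount (u * Equiv.swap i j) = invCount u + 1) ∨
    (u j < u i ∧ invCount u = invCount (u * Equiv.swap i j) + 1) := by
  set s := Equiv.swap i j with hs
  have hiltj : i < j := by rw [Fin.lt_def]; omega
  have hne : i ≠ j := hiltj.ne
  have hsi : s i = j := Equiv.swap_apply_left i j
  have hsj : s j = i := Equiv.swap_apply_right i j
  -- the auxiliary set
  have hS' : (univ.filter fun p : Fin n × Fin n => s p.1 < s p.2 ∧ u (s p.2) < u (s p.1)).card
      = invCount u := by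
    rw [invCount]
    apply Finset.card_nbij' (fun p => (s p.1, s p.2)) (fun p => (s p.1, s p.2))
    · intro p hp
      simp only [mem_coe, mem_filter, mem_univ, true_and] at hp ⊢
      exact hp
    · intro p hp
      simp only [mem_coe, mem_filter, mem_univ, true_and, hs, Equiv.swap_apply_self] at hp ⊢
      exact hp
    · intro p _
      simp [hs, Equiv.swap_apply_self]
    · intro p _
      simp [hs, Equiv.swap_apply_self]
  have hmulapp : ∀ p : Fin n, (u * s) p = u (s p) := fun p => rfl
  have hQ : invCount (u * s)
      = (univ.filter fun p : Fin n × Fin n => p.1 < p.2 ∧ u (s p.2) < u (s p.1)).card := by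
    rw [invCount]
    congr 1
  rcases (lt_or_gt_of_ne (fun h => hne (u.injective h)) :
      u i < u j ∨ u j < u i) with hcase | hcase
  · left
    refine ⟨hcase, ?_⟩
    rw [hQ, ← hS']
    have hset : (univ.filter fun p : Fin n × Fin n => p.1 < p.2 ∧ u (s p.2) < u (s p.1))
        = insert (i, j) (univ.filter fun p : Fin n × Fin n => s p.1 < s p.2 ∧ u (s p.2) < u (s p.1)) := by
      ext p
      simp only [mem_insert, mem_filter, mem_univ, true_and]
      constructor
      · rintro ⟨hlt, hu⟩
        by_cases hp : p = (i, j)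
        · exact Or.inl hp
        · refine Or.inr ⟨?_, hu⟩
          have hp2 : ¬(p.1 = j ∧ p.2 = i) := by
            rintro ⟨e1, e2⟩
            rw [e1, e2] at hlt
            exact absurd hlt (not_lt.2 hiltj.le)
          have hp1 : ¬(p.1 = i ∧ p.2 = j) := fun h => hp (Prod.ext h.1 h.2)
          exact (swap_lt_swap_iff hij hp1 hp2).2 hlt
      · rintro (rfl | ⟨hlt, hu⟩)
        · exact ⟨hiltj, by rwa [hsi, hsj]⟩
        · by_cases hp1 : p.1 = j ∧ p.2 = i
          · rw [hp1.1, hp1.2] at hu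
            rw [hsi, hsj] at hu
            exact absurd hcase (not_lt.2 hu.le)
          · by_cases hp2 : p.1 = i ∧ p.2 = j
            · rw [hp2.1, hp2.2, hsi, hsj] at hlt
              exact absurd hlt (not_lt.2 hiltj.le)
            · exact ⟨(swap_lt_swap_iff hij hp2 hp1).1 hlt, hu⟩
    rw [hset, card_insert_of_notMem]
    simp only [mem_filter, mem_univ, true_and, hsi, hsj, not_and]
    intro h
    exact absurd h (not_lt.2 hiltj.le)
  · right
    refine ⟨hcase, ?_⟩
    rw [hQ, ← hS']
    have hset : (univ.filter fun p : Fin n × Fin n => s p.1 < s p.2 ∧ u (s p.2) < u (s p.1))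
        = insert (j, i) (univ.filter fun p : Fin n × Fin n => p.1 < p.2 ∧ u (s p.2) < u (s p.1)) := by
      ext p
      simp only [mem_insert, mem_filter, mem_univ, true_and]
      constructor
      · rintro ⟨hlt, hu⟩
        by_cases hp : p = (j, i)
        · exact Or.inl hp
        · refine Or.inr ⟨?_, hu⟩
          have hp2 : ¬(p.1 = j ∧ p.2 = i) := fun h => hp (Prod.ext h.1 h.2)
          by_cases hp1 : p.1 = i ∧ p.2 = j
          · rw [hp1.1, hp1.2, hsi, hsj] at hlt
            exact absurd hlt (not_lt.2 hiltj.le)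
          · exact (swap_lt_swap_iff hij hp1 hp2).1 hlt
      · rintro (rfl | ⟨hlt, hu⟩)
        · refine ⟨by rwa [hsi, hsj], by rwa [hsi, hsj]⟩
        · by_cases hp1 : p.1 = i ∧ p.2 = j
          · rw [hp1.1, hp1.2, hsi, hsj] at hu
            exact absurd hcase (not_lt.2 hu.le)
          · by_cases hp2 : p.1 = j ∧ p.2 = i
            · rw [hp2.1, hp2.2] at hlt
              exact absurd hlt (not_lt.2 hiltj.le)
            · exact ⟨(swap_lt_swap_iff hij hp1 hp2).2 hlt, hu⟩
    rw [hset, card_insert_of_notMem]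
    simp only [mem_filter, mem_univ, true_and, not_and]
    intro h
    exact absurd h (not_lt.2 hiltj.le)

lemma invCount_adjSwap {n : ℕ} {i j : Fin n} (hij : (j : ℕ) = (i : ℕ) + 1) :
    invCount (Equiv.swap i j) = 1 := by
  have hiltj : i < j := by rw [Fin.lt_def]; omega
  rcases invCount_mul_adjSwap (1 : Equiv.Perm (Fin n)) hij with ⟨-, h⟩ | ⟨h, -⟩
  · rw [one_mul] at h
    rw [h, invCount_one]
  · simp only [Equiv.Perm.one_apply] at h
    exact absurd h (not_lt.2 hiltj.le)

open Finset in
lemma invCount_inv {n : ℕ} (w : Equiv.Perm (Fin n)) : invCount w⁻¹ = invCount w := by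
  rw [invCount, invCount]
  apply Finset.card_nbij' (fun p => (w⁻¹ p.2, w⁻¹ p.1)) (fun p => (w p.2, w p.1))
  · intro p hp
    simp only [mem_coe, mem_filter, mem_univ, true_and, Equiv.Perm.inv_def, Equiv.apply_symm_apply] at hp ⊢
    exact ⟨hp.2, hp.1⟩
  · intro p hp
    simp only [mem_coe, mem_filter, mem_univ, true_and, Equiv.Perm.inv_def, Equiv.symm_apply_apply] at hp ⊢
    exact ⟨hp.2, hp.1⟩
  · intro p _
    simp
  · intro p _
    simp

lemma exists_descent {n : ℕ} (w : Equiv.Perm (Fin n)) (hw : w ≠ 1) :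
    ∃ i j : Fin n, (j : ℕ) = (i : ℕ) + 1 ∧ w j < w i := by
  by_contra h
  push_neg at h
  apply hw
  have hmono : StrictMono ⇑w := by
    cases n with
    | zero => exact fun a => a.elim0
    | succ m =>
      rw [Fin.strictMono_iff_lt_succ]
      intro k
      have hle := h (Fin.castSucc k) (Fin.succ k) (by simp)
      exact lt_of_le_of_ne hle fun he => k.castSucc_lt_succ.ne (w.injective he)
  haveI : WellFoundedLT (Fin n) := Finite.to_wellFoundedLT
  have h2 : StrictMono ⇑(1 : Equiv.Perm (Fin n)) := fun a b hab => hab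
  have h3 : ⇑w = ⇑(1 : Equiv.Perm (Fin n)) := (hmono.range_inj h2).1
    (by rw [w.surjective.range_eq, (1 : Equiv.Perm (Fin n)).surjective.range_eq])
  exact Equiv.coe_fn_injective h3

lemma eq_one_of_invCount_eq_zero {n : ℕ} {w : Equiv.Perm (Fin n)} (h : invCount w = 0) :
    w = 1 := by
  by_contra hw
  obtain ⟨i, j, hij, hd⟩ := exists_descent w hw
  rcases invCount_mul_adjSwap w hij with ⟨h1, -⟩ | ⟨-, h1⟩
  · exact absurd hd (not_lt.2 h1.le)
  · omega

open Finset in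
lemma invCount_lt_invCount_rev {n : ℕ} {v : Equiv.Perm (Fin n)} (hv : v ≠ Fin.revPerm) :
    invCount v < invCount (Fin.revPerm : Equiv.Perm (Fin n)) := by
  have hrev : invCount (Fin.revPerm : Equiv.Perm (Fin n))
      = (univ.filter fun p : Fin n × Fin n => p.1 < p.2).card := by
    rw [invCount]
    congr 1
    ext p
    simp [Fin.rev_lt_rev, and_self]
  have hle : invCount v ≤ invCount (Fin.revPerm : Equiv.Perm (Fin n)) := by
    rw [hrev, invCount]
    exact card_le_card (fun p hp => by
      simp only [mem_filter, mem_univ, true_and] at hp ⊢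
      exact hp.1)
  rcases lt_or_eq_of_le hle with hlt | heq
  · exact hlt
  exfalso
  apply hv
  have hsub : (univ.filter fun p : Fin n × Fin n => p.1 < p.2 ∧ v p.2 < v p.1)
      ⊆ (univ.filter fun p : Fin n × Fin n => p.1 < p.2) :=
    fun p hp => by
      simp only [mem_filter, mem_univ, true_and] at hp ⊢
      exact hp.1
  have hcardle : (univ.filter fun p : Fin n × Fin n => p.1 < p.2).card
      ≤ (univ.filter fun p : Fin n × Fin n => p.1 < p.2 ∧ v p.2 < v p.1).card := by
    rw [← hrev, ← heq, invCount]
  have hseteq := Finset.eq_of_subset_of_card_le hsub hcardle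
  have hall : ∀ p q : Fin n, p < q → v q < v p := by
    intro p q hpq
    have : (p, q) ∈ (univ.filter fun p : Fin n × Fin n => p.1 < p.2) := by
      simp [hpq]
    rw [← hseteq] at this
    simp only [mem_filter, mem_univ, true_and] at this
    exact this.2
  set u1 : Equiv.Perm (Fin n) := v * Fin.revPerm with hu1
  have hmono : StrictMono ⇑u1 := by
    intro k l hkl
    have hr : Fin.rev l < Fin.rev k := by rwa [Fin.rev_lt_rev]
    have := hall (Fin.rev l) (Fin.rev k) hr
    simpa [hu1, Equiv.Perm.mul_apply] using this
  haveI : WellFoundedLT (Fin n) := Finite.to_wellFoundedLT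
  have h2 : StrictMono ⇑(1 : Equiv.Perm (Fin n)) := fun a b hab => hab
  have h3 : ⇑u1 = ⇑(1 : Equiv.Perm (Fin n)) := (hmono.range_inj h2).1
    (by rw [u1.surjective.range_eq, (1 : Equiv.Perm (Fin n)).surjective.range_eq])
  have h4 : u1 = 1 := Equiv.coe_fn_injective h3
  have h5 : (Fin.revPerm : Equiv.Perm (Fin n))⁻¹ = Fin.revPerm := Fin.revPerm_symm
  calc v = u1 * Fin.revPerm⁻¹ := by rw [hu1]; group
  _ = Fin.revPerm := by rw [h4, one_mul, h5]

lemma mul_eq_one_unique {A : Type*} [Ring A] {x y y' : A} (h1 : y * x = 1) (h2 : x * y' = 1) :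
    y = y' := by
  have h : y * (x * y') = y := by rw [h2, mul_one]
  rw [← mul_assoc, h1, one_mul] at h
  exact h.symm

lemma repr_U_triangular {n : ℕ} {A : Type*} [Ring A] [Algebra R A]
    (B : Module.Basis (Equiv.Perm (Fin n)) R A)
    (h1 : B 1 = 1)
    (hmul : ∀ u v : Equiv.Perm (Fin n),
      invCount (u * v) = invCount u + invCount v → B (u * v) = B u * B v)
    (hquad : ∀ s : Equiv.Perm (Fin n), IsAdjSwap s → B s ^ 2 = z • B s + 1)
    (U : Equiv.Perm (Fin n) → A)
    (hU : ∀ w : Equiv.Perm (Fin n), U w * B w⁻¹ = 1 ∧ B w⁻¹ * U w = 1) :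
    ∀ N (w : Equiv.Perm (Fin n)), invCount w ≤ N →
      (∀ v, invCount w < invCount v → B.repr (U w) v = 0) ∧ B.repr (U w) w = 1 := by
  have hU1 : ∀ (w : Equiv.Perm (Fin n)), w = 1 →
      (∀ v, invCount w < invCount v → B.repr (U w) v = 0) ∧ B.repr (U w) w = 1 := by
    rintro w rfl
    have hU1' : U 1 = 1 := by
      have := (hU 1).1
      rwa [inv_one, h1, mul_one] at this
    have hrepr : B.repr (U 1) = Finsupp.single 1 1 := by
      rw [hU1', ← h1, B.repr_self]
    constructor
    · intro v hv
      have hv1 : v ≠ 1 := by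
        intro hv1
        rw [hv1] at hv
        exact absurd hv (lt_irrefl _)
      rw [hrepr, Finsupp.single_apply, if_neg (Ne.symm hv1)]
    · rw [hrepr, Finsupp.single_apply, if_pos rfl]
  intro N
  induction N with
  | zero =>
    intro w hw
    exact hU1 w (eq_one_of_invCount_eq_zero (Nat.le_zero.1 hw))
  | succ N ih =>
    intro w hw
    by_cases hwN : invCount w ≤ N
    · exact ih w hwN
    have hwN' : invCount w = N + 1 := by omega
    have hw1 : w ≠ 1 := by
      intro h
      rw [h, invCount_one] at hwN'
      omega
    obtain ⟨i, j, hij, hdesc⟩ := exists_descent w hw1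
    set s := Equiv.swap i j with hsdef
    have hs : IsAdjSwap s := ⟨i, j, hij, rfl⟩
    have hss : s * s = 1 := Equiv.swap_mul_self i j
    have hsinv : s⁻¹ = s := Equiv.swap_inv i j
    have hlen : invCount w = invCount (w * s) + 1 := by
      rcases invCount_mul_adjSwap w hij with ⟨h', -⟩ | ⟨-, h'⟩
      · exact absurd hdesc (not_lt.2 h'.le)
      · exact h'
    set u' := w * s with hu'def
    have hu'w : u' * s = w := by rw [hu'def, mul_assoc, hss, mul_one]
    have hu'N : invCount u' ≤ N := by omega
    obtain ⟨ihA, ihB⟩ := ih u' hu'N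
    -- U s = B s - z • 1
    have hBss : B s * B s = z • B s + 1 := by rw [← sq, hquad s hs]
    have hBsinv : B s * (B s - z • (1 : A)) = 1 := by
      rw [mul_sub, hBss, mul_smul_comm, mul_one]
      abel
    have hUsBs : U s * B s = 1 := by
      have := (hU s).1
      rwa [hsinv] at this
    have hBsUs : B s * U s = 1 := by
      have := (hU s).2
      rwa [hsinv] at this
    have hUs : U s = B s - z • (1 : A) := mul_eq_one_unique hUsBs hBsinv
    -- U w = U u' * U s
    have hfact : B w⁻¹ = B s * B u'⁻¹ := by
      have he : s * u'⁻¹ = w⁻¹ := by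
        rw [hu'def, mul_inv_rev, hsinv, ← mul_assoc, hss, one_mul]
      have hlen2 : invCount (s * u'⁻¹) = invCount s + invCount u'⁻¹ := by
        rw [he, invCount_inv, invCount_inv, hsdef, invCount_adjSwap hij, hlen]
        omega
      rw [← he]
      exact hmul s u'⁻¹ hlen2
    have hUw : U w = U u' * U s := by
      refine mul_eq_one_unique (hU w).1 ?_
      rw [hfact, mul_assoc, ← mul_assoc (B u'⁻¹), (hU u').2, one_mul, hBsUs]
    -- expansion
    set c := B.repr (U u') with hcdef
    have hexp : U w = ∑ v, c v • (B v * B s) - ∑ v, (z * c v) • B v := by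
      rw [hUw, hUs, mul_sub, mul_smul_comm, mul_one]
      congr 1
      · conv_lhs => rw [← B.sum_repr (U u')]
        rw [Finset.sum_mul]
        exact Finset.sum_congr rfl fun v _ => smul_mul_assoc _ _ _
      · conv_lhs => rw [← B.sum_repr (U u')]
        rw [Finset.smul_sum]
        exact Finset.sum_congr rfl fun v _ => (smul_smul _ _ _)
    -- per-v multiplication rule
    have hkey : ∀ v : Equiv.Perm (Fin n),
        (invCount (v * s) = invCount v + 1 ∧ B v * B s = B (v * s)) ∨
        (invCount v = invCount (v * s) + 1 ∧ B v * B s = z • B v + B (v * s)) := by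
      intro v
      rcases invCount_mul_adjSwap v hij with ⟨-, hc⟩ | ⟨-, hc⟩
      · left
        refine ⟨hc, ?_⟩
        rw [← hmul v s (by rw [hc, hsdef, invCount_adjSwap hij])]
      · right
        refine ⟨hc, ?_⟩
        have hvss : (v * s) * s = v := by rw [mul_assoc, hss, mul_one]
        have hb : B v = B (v * s) * B s := by
          conv_lhs => rw [← hvss]
          exact hmul (v * s) s (by rw [hvss, hsdef, invCount_adjSwap hij]; omega)
        rw [hb, mul_assoc, hBss, mul_add, mul_one, mul_smul_comm, ← hb]
    have hBvs0 : ∀ v t : Equiv.Perm (Fin n), t ≠ v → t ≠ v * s →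
        B.repr (B v * B s) t = 0 := by
      intro v t htv htvs
      rcases hkey v with ⟨-, hc⟩ | ⟨-, hc⟩ <;> rw [hc]
      · rw [B.repr_self, Finsupp.single_apply, if_neg (Ne.symm htvs)]
      · rw [map_add, map_smul, B.repr_self, B.repr_self, Finsupp.add_apply,
          Finsupp.smul_apply, Finsupp.single_apply, Finsupp.single_apply,
          if_neg (Ne.symm htv), if_neg (Ne.symm htvs), smul_zero, add_zero]
    -- repr formula
    have hrepr : ∀ t, B.repr (U w) t = (∑ v, c v * B.repr (B v * B s) t) - z * c t := by
      intro t
      rw [hexp, map_sub, map_sum, map_sum, Finsupp.sub_apply]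
      congr 1
      · rw [Finset.sum_apply']
        exact Finset.sum_congr rfl fun v _ => by rw [map_smul, Finsupp.smul_apply, smul_eq_mul]
      · rw [Finset.sum_apply']
        simp only [map_smul, Finsupp.smul_apply, B.repr_self, Finsupp.single_apply,
          smul_eq_mul, mul_ite, mul_one, mul_zero]
        rw [Finset.sum_ite_eq' Finset.univ t (fun v => z * c v)]
        simp
    constructor
    · intro t ht
      rw [hrepr t]
      have hct : c t = 0 := ihA t (by omega)
      rw [hct, mul_zero, sub_zero]
      apply Finset.sum_eq_zero
      intro v _
      by_cases hcv : c v = 0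
      · rw [hcv, zero_mul]
      · have hvN : invCount v ≤ invCount u' := not_lt.1 fun hlt => hcv (ihA v hlt)
        have ht1 : t ≠ v := by
          intro h
          rw [h] at ht
          omega
        have ht2 : t ≠ v * s := by
          intro h
          rw [h] at ht
          rcases hkey v with ⟨h', -⟩ | ⟨h', -⟩ <;> omega
        rw [hBvs0 v t ht1 ht2, mul_zero]
    · rw [hrepr w]
      have hcw : c w = 0 := ihA w (by omega)
      rw [hcw, mul_zero, sub_zero]
      rw [Finset.sum_eq_single u']
      · rcases hkey u' with ⟨-, hc⟩ | ⟨h', -⟩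
        · rw [ihB, one_mul, hc, hu'w, B.repr_self, Finsupp.single_apply, if_pos rfl]
        · rw [hu'w] at h'
          omega
      · intro v _ hvne
        by_cases hcv : c v = 0
        · rw [hcv, zero_mul]
        · have hvN : invCount v ≤ invCount u' := not_lt.1 fun hlt => hcv (ihA v hlt)
          have ht1 : w ≠ v := by
            intro h
            rw [← h] at hvN
            omega
          have ht2 : w ≠ v * s := by
            intro h
            apply hvne
            have : v = u' := by
              rw [hu'def, h, mul_assoc, hss, mul_one]
            exact this
          rw [hBvs0 v w ht1 ht2, mul_zero]
      · intro h
        exact absurd (Finset.mem_univ u') h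

/-- (Kálmán's coefficient lemma.) Let `x ∈ Hₙ` be expanded in the positive basis as
`x = Σ_w a_w T_w` and in the negative basis as `x = Σ_w b_w U_w`, where
`U_w = (T_{w⁻¹})⁻¹`. Then the coefficients of the longest element `δ` agree: `a_δ = b_δ`. -/
theorem kalman_coefficient_lemma (n : ℕ) (A : Type*) [Ring A] [Algebra R A]
    (B : Module.Basis (Equiv.Perm (Fin n)) R A)
    (h1 : B 1 = 1)
    (hmul : ∀ u v : Equiv.Perm (Fin n),
      invCount (u * v) = invCount u + invCount v → B (u * v) = B u * B v)
    (hquad : ∀ s : Equiv.Perm (Fin n), IsAdjSwap s → B s ^ 2 = z • B s + 1)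
    (U : Equiv.Perm (Fin n) → A)
    (hU : ∀ w : Equiv.Perm (Fin n), U w * B w⁻¹ = 1 ∧ B w⁻¹ * U w = 1)
    (x : A) (a b : Equiv.Perm (Fin n) → R)
    (ha : x = ∑ w : Equiv.Perm (Fin n), a w • B w)
    (hb : x = ∑ w : Equiv.Perm (Fin n), b w • U w) :
    a (Fin.revPerm : Equiv.Perm (Fin n)) = b (Fin.revPerm : Equiv.Perm (Fin n)) := by
  classical
  set δ : Equiv.Perm (Fin n) := Fin.revPerm with hδ
  have htri := fun w : Equiv.Perm (Fin n) =>
    repr_U_triangular B h1 hmul hquad U hU (invCount w) w le_rfl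
  have haδ : a δ = B.repr x δ := by
    rw [ha, map_sum, Finset.sum_apply']
    simp only [map_smul, B.repr_self, Finsupp.smul_apply, Finsupp.single_apply,
      smul_eq_mul, mul_ite, mul_one, mul_zero]
    rw [Finset.sum_ite_eq' Finset.univ δ (fun w => a w)]
    simp
  have hbδ : B.repr x δ = b δ := by
    rw [hb, map_sum, Finset.sum_apply']
    rw [Finset.sum_eq_single δ]
    · rw [map_smul, Finsupp.smul_apply, (htri δ).2, smul_eq_mul, mul_one]
    · intro w _ hwδ
      rw [map_smul, Finsupp.smul_apply, (htri w).1 δ (invCount_lt_invCount_rev hwδ), smul_zero]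
    · intro h
      exact absurd (Finset.mem_univ δ) h
  rw [haδ, hbδ]
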